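/- arXiv:1711.04051 — 3 statements merged into one kernel-verified Lean document; each statement's English description precedes it below -/
import Mathlib

section
/- Let G be a torsion-free group with trivial center. If an automorphism φ of G has finite order n ≥ 1, then its image in the outer automorphism group Out(G) = Aut(G)/Inn(G) also has order n. -/
/-- The subgroup of inner automorphisms is normal in `Aut(G)`. -/
instance inn_normal (G : Type*) [Group G] :
    ((MulAut.conj : G →* MulAut G).range).Normal := by
  constructor
  rintro x ⟨g, rfl⟩ φ
  refine ⟨φ g, ?_⟩
  ext h
  simp [MulAut.conj_apply, MulAut.mul_apply, map_mul]

/-- A monoid is torsion-free if no nontrivial element has finite order. -/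
def Monoid.IsTorsionFree (G : Type*) [Monoid G] : Prop :=
  ∀ g : G, g ≠ 1 → ¬IsOfFinOrder g

/-- Let `G` be a torsion-free group with trivial center.  If an automorphism
`φ` of `G` has finite order `n ≥ 1`, then its image in
`Out(G) = Aut(G)/Inn(G)` also has order `n`. -/
theorem orderOf_outer_eq {G : Type*} [Group G]
    (hTF : Monoid.IsTorsionFree G) (hZ : Subgroup.center G = ⊥)
    (φ : MulAut G) (n : ℕ) (hn : 1 ≤ n) (hord : orderOf φ = n) :
    orderOf (QuotientGroup.mk' (MulAut.conj : G →* MulAut G).range φ) = n := by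
  set k := orderOf (QuotientGroup.mk' (MulAut.conj : G →* MulAut G).range φ) with hk
  have hdvd : k ∣ n := by
    rw [← hord]; exact orderOf_map_dvd _ φ
  refine Nat.dvd_antisymm hdvd ?_
  -- show n ∣ k, i.e. φ ^ k = 1
  have hφk : (QuotientGroup.mk' (MulAut.conj : G →* MulAut G).range φ) ^ k = 1 :=
    pow_orderOf_eq_one _
  rw [← map_pow] at hφk
  have hmem : φ ^ k ∈ (MulAut.conj : G →* MulAut G).range :=
    (QuotientGroup.eq_one_iff _).mp hφk
  obtain ⟨g, hg⟩ := hmem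
  -- conj g has finite order: (conj g)^n = (φ^k)^n = (φ^n)^k = 1
  have hfin : IsOfFinOrder (MulAut.conj g) := by
    refine isOfFinOrder_iff_pow_eq_one.mpr ⟨n, hn, ?_⟩
    rw [hg, ← pow_mul, mul_comm, pow_mul, ← hord, pow_orderOf_eq_one, one_pow]
  have hgfin : IsOfFinOrder g := by
    rcases isOfFinOrder_iff_pow_eq_one.mp hfin with ⟨m, hm, hpow⟩
    refine isOfFinOrder_iff_pow_eq_one.mpr ⟨m, hm, ?_⟩
    have : MulAut.conj (g ^ m) = 1 := by rw [map_pow, hpow]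
    have hc : g ^ m ∈ Subgroup.center G := by
      rw [Subgroup.mem_center_iff]
      intro h
      have := DFunLike.congr_fun this h
      simp only [MulAut.conj_apply, MulAut.one_apply] at this
      conv_lhs => rw [← this]
      group
    rw [hZ, Subgroup.mem_bot] at hc
    exact hc
  have hg1 : g = 1 := by
    by_contra hne
    exact hTF g hne hgfin
  have : φ ^ k = 1 := by rw [← hg, hg1, map_one]
  rw [← hord]
  exact orderOf_dvd_of_pow_eq_one this
end

section
/- Let G be the group with presentation ⟨a, b | a^r = b^s⟩ (the group of the (r,s)-torus knot, with r, s coprime and ≥ 2). Then the center of G is the infinite cyclic subgroup generated by a^r = b^s, and the quotient G/Z(G) is isomorphic to the free product ℤ/r * ℤ/s. -/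
/-- The relation `a^r = b^s` defining the `(r,s)`-torus knot group
`G = ⟨a, b ∣ a^r = b^s⟩`. -/
def torusKnotRels (r s : ℕ) : Set (FreeGroup (Fin 2)) :=
  {FreeGroup.of 0 ^ r * (FreeGroup.of 1 ^ s)⁻¹}

open Monoid

section AuxCentral

open CoprodI in
theorem aux_coprodI_central {ι : Type*} [DecidableEq ι] {G : ι → Type*} [∀ i, Group (G i)]
    [∀ i, DecidableEq (G i)] [∀ i, Nontrivial (G i)]
    (hι : ∀ j : ι, ∃ k, k ≠ j) (c : CoprodI G) (hc : ∀ g, g * c = c * g) : c = 1 := by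
  by_contra hne
  set w : Word G := Word.equiv c with hw
  have hprod : w.prod = c := Word.equiv.symm_apply_apply c
  have hl : w.toList ≠ [] := by
    intro h
    apply hne
    have hwe : w = Word.empty := Word.ext h
    rw [← hprod, hwe, Word.prod_empty]
  obtain ⟨k, hk⟩ := hι (w.toList.getLast hl).fst
  obtain ⟨x, hx1⟩ := exists_ne (1 : G k)
  -- the word `w ++ [(⟨k, x⟩ : Σ i, G i)]`
  have hchain : (w.toList ++ [(⟨k, x⟩ : Σ i, G i)]).Chain' fun l l' => Sigma.fst l ≠ Sigma.fst l' := by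
    rw [List.Chain', List.isChain_append]
    refine ⟨w.chain_ne, List.isChain_singleton _, ?_⟩
    intro p hp q hq
    rw [List.getLast?_eq_getLast hl, Option.mem_some_iff] at hp
    simp only [List.head?_cons, Option.mem_some_iff] at hq
    subst hp; subst hq
    exact hk.symm
  set w₂ : Word G := ⟨w.toList ++ [(⟨k, x⟩ : Σ i, G i)], by
      intro l hlmem
      rcases List.mem_append.1 hlmem with h | h
      · exact w.ne_one l h
      · simp only [List.mem_singleton] at h
        subst h
        exact hx1, hchain⟩ with hw₂
  have hprod₂ : w₂.prod = c * of x := by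
    rw [Word.prod, hw₂]
    simp only [List.map_append, List.prod_append, List.map_singleton, List.prod_singleton]
    rw [← hprod, Word.prod]
  have hsmul : of x • w = w₂ := by
    have : (of x • w).prod = w₂.prod := by
      rw [Word.prod_smul, hprod, hprod₂, hc]
    exact Word.equiv.symm.injective this
  by_cases hfst : w.fstIdx = some k
  · -- length contradiction
    set q := Word.equivPair k w with hq
    have hrq : Word.rcons q = w := by
      rw [← Word.equivPair_symm, hq, Equiv.symm_apply_apply]
    have hqh : q.head ≠ 1 := by
      intro h1
      rw [Word.rcons, dif_pos h1] at hrq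
      exact q.fstIdx_ne (hrq ▸ hfst)
    have hlen : w.toList.length = q.tail.toList.length + 1 := by
      rw [← hrq, Word.rcons, dif_neg hqh]
      simp [Word.cons]
    have hrlen : ∀ {i : ι} (p : Word.Pair G i),
        (Word.rcons p).toList.length ≤ p.tail.toList.length + 1 := by
      intro i p
      rw [Word.rcons]
      split
      · exact Nat.le_succ _
      · simp [Word.cons]
    have hlen2 : (of x • w).toList.length ≤ w.toList.length := by
      rw [Word.of_smul_def, ← hq]
      calc (Word.rcons ⟨x * q.head, q.tail, q.fstIdx_ne⟩).toList.length
          ≤ q.tail.toList.length + 1 := hrlen _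
        _ = w.toList.length := hlen.symm
    have hlen3 : (of x • w).toList.length = w.toList.length + 1 := by
      rw [hsmul]
      show (w.toList ++ [(⟨k, x⟩ : Σ i, G i)]).length = _
      simp
    omega
  · have hcons : (of x • w).toList = ⟨k, x⟩ :: w.toList := by
      rw [← Word.cons_eq_smul (h1 := hfst) (h2 := hx1)]
      simp [Word.cons]
    have hlist : w.toList ++ [(⟨k, x⟩ : Σ i, G i)] = ⟨k, x⟩ :: w.toList := by
      rw [show w.toList ++ [(⟨k, x⟩ : Σ i, G i)] = w₂.toList from rfl, ← hsmul]
      exact hcons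
    obtain ⟨a, t, hat⟩ := List.exists_cons_of_ne_nil hl
    rw [hat] at hlist
    simp only [List.cons_append, List.cons.injEq] at hlist
    apply hfst
    rw [Word.fstIdx, hat, List.head?_cons, hlist.1]
    rfl

theorem aux_coprod_central {M N : Type u} [Group M] [Group N] [Nontrivial M] [Nontrivial N]
    (c : Coprod M N) (hc : ∀ g, g * c = c * g) : c = 1 := by
  classical
  let F : Bool → Type u := fun b => cond b M N
  letI : ∀ b, Group (F b) := fun b => by cases b <;> dsimp [F] <;> infer_instance
  letI : ∀ b, Nontrivial (F b) := fun b => by cases b <;> dsimp [F] <;> infer_instance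
  letI : ∀ b, DecidableEq (F b) := fun b => Classical.decEq _
  let α : Coprod M N →* CoprodI F :=
    Coprod.lift (CoprodI.of (M := F) (i := true)) (CoprodI.of (M := F) (i := false))
  let β : CoprodI F →* Coprod M N :=
    CoprodI.lift (fun b => Bool.rec (motive := fun b => F b →* Coprod M N) Coprod.inr Coprod.inl b)
  have hβα : ∀ x, β (α x) = x := by
    intro x
    have : (β.comp α) = MonoidHom.id _ := by
      apply Coprod.hom_ext <;> ext m <;>
        simp only [MonoidHom.comp_apply, MonoidHom.id_apply, α, β,
          Coprod.lift_apply_inl, Coprod.lift_apply_inr] <;>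
        exact CoprodI.lift_of _ _
    exact DFunLike.congr_fun this x
  have hαβ : ∀ x, α (β x) = x := by
    intro x
    have : (α.comp β) = MonoidHom.id _ := by
      apply CoprodI.ext_hom
      intro i
      cases i <;> ext m <;>
        simp only [MonoidHom.comp_apply, MonoidHom.id_apply, α, β, CoprodI.lift_of] <;>
        first
          | exact Coprod.lift_apply_inl _ _ _
          | exact Coprod.lift_apply_inr _ _ _
    exact DFunLike.congr_fun this x
  have h1 : α c = 1 := by
    have hcg : ∀ g, g * α c = α c * g := fun g => by
      rw [← hαβ g, ← map_mul, ← map_mul, hc]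
    exact @aux_coprodI_central Bool instDecidableEqBool F _ _ _
      (fun j => ⟨!j, by cases j <;> simp⟩) (α c) hcg
  have := congrArg β h1
  rwa [hβα, map_one] at this

end AuxCentral

section ZModHom

/-- Monoid hom out of `Multiplicative (ZMod n)` determined by an element whose `n`-th power
is one. -/
def zmodPowHom {n : ℕ} [NeZero n] {H : Type*} [Group H] (g : H) (hg : g ^ n = 1) :
    Multiplicative (ZMod n) →* H where
  toFun x := g ^ (Multiplicative.toAdd x).val
  map_one' := by simp
  map_mul' x y := by
    simp only [toAdd_mul]
    rw [ZMod.val_add, ← pow_eq_pow_mod _ hg, pow_add]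

lemma zmodPowHom_ofAdd_one {n : ℕ} (hn : 1 < n) {H : Type*} [Group H] (g : H) (hg : g ^ n = 1) :
    haveI : NeZero n := ⟨by omega⟩
    zmodPowHom g hg (Multiplicative.ofAdd (1 : ZMod n)) = g := by
  haveI : NeZero n := ⟨by omega⟩
  haveI : Fact (1 < n) := ⟨hn⟩
  simp [zmodPowHom, ZMod.val_one]

lemma zmod_hom_ext {n : ℕ} [NeZero n] {H : Type*} [Group H]
    {f g : Multiplicative (ZMod n) →* H}
    (h : f (Multiplicative.ofAdd (1 : ZMod n)) = g (Multiplicative.ofAdd (1 : ZMod n))) :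
    f = g := by
  refine MonoidHom.ext fun x => ?_
  have hx : x = (Multiplicative.ofAdd (1 : ZMod n)) ^ (Multiplicative.toAdd x).val := by
    apply Multiplicative.toAdd.injective
    simp only [toAdd_pow, toAdd_ofAdd, nsmul_eq_mul, mul_one]
    exact (ZMod.natCast_rightInverse _).symm
  rw [hx, map_pow, map_pow, h]

end ZModHom

namespace TorusKnotAux

variable {r s : ℕ}

lemma lift_rel {H : Type*} [Group H] (f : Fin 2 → H) (hf : f 0 ^ r * (f 1 ^ s)⁻¹ = 1) :
    ∀ w ∈ torusKnotRels r s, FreeGroup.lift f w = 1 := by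
  intro w hw
  rw [torusKnotRels, Set.mem_singleton_iff] at hw
  subst hw
  simpa [map_mul, map_pow, map_inv] using hf

lemma rel_holds (r s : ℕ) :
    (PresentedGroup.of 0 : PresentedGroup (torusKnotRels r s)) ^ r = PresentedGroup.of 1 ^ s := by
  have h : PresentedGroup.mk (torusKnotRels r s)
      (FreeGroup.of 0 ^ r * (FreeGroup.of 1 ^ s)⁻¹) = 1 := by
    apply (QuotientGroup.eq_one_iff _).mpr
    exact Subgroup.subset_normalClosure rfl
  rw [map_mul, map_pow, map_inv, map_pow, mul_inv_eq_one] at h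
  exact h

end TorusKnotAux

open TorusKnotAux

/-- Let `G = ⟨a, b ∣ a^r = b^s⟩` be the `(r,s)`-torus knot group, with `r, s`
coprime and `≥ 2`.  Then the center of `G` is the infinite cyclic subgroup
generated by `a^r = b^s`, and `G/Z(G)` is isomorphic to the free product
`ℤ/r * ℤ/s`. -/
theorem torus_knot_group_center (r s : ℕ) (hr : 2 ≤ r) (hs : 2 ≤ s)
    (hco : Nat.Coprime r s) :
    ¬ IsOfFinOrder ((PresentedGroup.of 0 : PresentedGroup (torusKnotRels r s)) ^ r) ∧
    Subgroup.center (PresentedGroup (torusKnotRels r s)) =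
      Subgroup.zpowers ((PresentedGroup.of 0 : PresentedGroup (torusKnotRels r s)) ^ r) ∧
    Nonempty ((PresentedGroup (torusKnotRels r s) ⧸
        Subgroup.center (PresentedGroup (torusKnotRels r s))) ≃*
      Monoid.Coprod (Multiplicative (ZMod r)) (Multiplicative (ZMod s))) := by
  haveI : NeZero r := ⟨by omega⟩
  haveI : NeZero s := ⟨by omega⟩
  haveI : Fact (1 < r) := ⟨by omega⟩
  haveI : Fact (1 < s) := ⟨by omega⟩
  set G := PresentedGroup (torusKnotRels r s) with hG
  set a : G := PresentedGroup.of 0 with ha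
  set b : G := PresentedGroup.of 1 with hb
  set z : G := a ^ r with hz
  have key : a ^ r = b ^ s := rel_holds r s
  -- the homomorphism to `Multiplicative ℤ`
  have hψrel : (Multiplicative.ofAdd (s : ℤ)) ^ r *
      ((Multiplicative.ofAdd (r : ℤ)) ^ s)⁻¹ = 1 := by
    rw [← ofAdd_nsmul, ← ofAdd_nsmul, ← ofAdd_neg, ← ofAdd_add]
    rw [show (r • (s:ℤ)) + -(s • (r:ℤ)) = 0 by simp [nsmul_eq_mul]; ring, ofAdd_zero]
  set ψ : G →* Multiplicative ℤ :=
    PresentedGroup.toGroup (f := ![Multiplicative.ofAdd (s : ℤ), Multiplicative.ofAdd (r : ℤ)])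
      (lift_rel _ (by simpa using hψrel)) with hψ
  have hψa : ψ a = Multiplicative.ofAdd (s : ℤ) := by
    rw [ha, hψ]; exact PresentedGroup.toGroup.of _
  -- part 1 : infinite order
  have part1 : ¬ IsOfFinOrder z := by
    intro hfin
    obtain ⟨n, hn, hzn⟩ := isOfFinOrder_iff_pow_eq_one.mp hfin
    have h1 := congrArg ψ hzn
    rw [hz, ← pow_mul, map_pow, hψa, map_one] at h1
    have h2 := congrArg Multiplicative.toAdd h1
    simp only [toAdd_pow, toAdd_ofAdd, nsmul_eq_mul, toAdd_one] at h2
    have hpos : (0 : ℤ) < (r * n : ℕ) * (s : ℤ) := by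
      have : 0 < r * n := by positivity
      positivity
    rw [h2] at hpos
    exact lt_irrefl _ hpos
  -- z is central
  have hzc : z ∈ Subgroup.center G := by
    rw [Subgroup.mem_center_iff]
    intro g
    have hgen : ∀ x : G, x ∈ Subgroup.centralizer {z} := by
      intro x
      apply PresentedGroup.generated_by
      intro j
      rw [Subgroup.mem_centralizer_iff]
      intro h hh
      rw [Set.mem_singleton_iff] at hh
      subst hh
      fin_cases j
      · exact ((Commute.refl a).pow_left r).eq
      · rw [hz, key]
        exact ((Commute.refl b).pow_left s).eq
    have := Subgroup.mem_centralizer_iff.mp (hgen g) z rfl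
    exact this.symm
  set N : Subgroup G := Subgroup.zpowers z with hN
  have hNle : N ≤ Subgroup.center G := by
    rw [hN, Subgroup.zpowers_le]
    exact hzc
  haveI hNn : N.Normal := by
    constructor
    intro n hn g
    have hcomm := Subgroup.mem_center_iff.mp (hNle hn) g
    rw [hcomm, mul_assoc, mul_inv_cancel, mul_one]
    exact hn
  -- the homomorphism to the free product
  have hcr : (Multiplicative.ofAdd (1 : ZMod r)) ^ r = 1 := by
    rw [← ofAdd_nsmul, nsmul_eq_mul, mul_one, ZMod.natCast_self, ofAdd_zero]
  have hcs : (Multiplicative.ofAdd (1 : ZMod s)) ^ s = 1 := by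
    rw [← ofAdd_nsmul, nsmul_eq_mul, mul_one, ZMod.natCast_self, ofAdd_zero]
  set C := Monoid.Coprod (Multiplicative (ZMod r)) (Multiplicative (ZMod s)) with hC
  have hφrel : (Coprod.inl (Multiplicative.ofAdd (1 : ZMod r)) : C) ^ r *
      ((Coprod.inr (Multiplicative.ofAdd (1 : ZMod s)) : C) ^ s)⁻¹ = 1 := by
    rw [← map_pow (Coprod.inl : Multiplicative (ZMod r) →* C) (Multiplicative.ofAdd (1 : ZMod r)) r,
      ← map_pow (Coprod.inr : Multiplicative (ZMod s) →* C) (Multiplicative.ofAdd (1 : ZMod s)) s,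
      hcr, hcs, map_one, map_one, inv_one, mul_one]
  set φ : G →* C :=
    PresentedGroup.toGroup
      (f := ![Coprod.inl (Multiplicative.ofAdd (1 : ZMod r)),
              Coprod.inr (Multiplicative.ofAdd (1 : ZMod s))])
      (lift_rel _ (by simpa using hφrel)) with hφ
  have hφa : φ a = Coprod.inl (Multiplicative.ofAdd (1 : ZMod r)) := by
    rw [ha, hφ]; exact PresentedGroup.toGroup.of _
  have hφb : φ b = Coprod.inr (Multiplicative.ofAdd (1 : ZMod s)) := by
    rw [hb, hφ]; exact PresentedGroup.toGroup.of _
  have hφz : φ z = 1 := by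
    rw [hz, map_pow, hφa, ← map_pow (Coprod.inl : Multiplicative (ZMod r) →* C) (Multiplicative.ofAdd (1 : ZMod r)) r, hcr, map_one]
  set π : G →* G ⧸ N := QuotientGroup.mk' N with hπ
  set φbar : G ⧸ N →* C := QuotientGroup.lift N φ (by
    intro g hg
    rcases hg with ⟨k, rfl⟩
    show φ (z ^ k) = 1
    rw [map_zpow, hφz, one_zpow]) with hφbar
  have hφbarπ : ∀ g : G, φbar (π g) = φ g := fun g => rfl
  -- the inverse homomorphism
  have hπzr : (π a) ^ r = 1 := by
    rw [← map_pow, hπ]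
    exact (QuotientGroup.eq_one_iff _).mpr (Subgroup.mem_zpowers z)
  have hπzs : (π b) ^ s = 1 := by
    rw [← map_pow, ← key]
    exact (QuotientGroup.eq_one_iff _).mpr (Subgroup.mem_zpowers z)
  set χ : C →* G ⧸ N := Coprod.lift (zmodPowHom (π a) hπzr) (zmodPowHom (π b) hπzs) with hχ
  have hcomp1 : φbar.comp χ = MonoidHom.id C := by
    apply Coprod.hom_ext
    · apply zmod_hom_ext
      simp only [MonoidHom.comp_apply, MonoidHom.id_apply, hχ, Coprod.lift_apply_inl]
      rw [zmodPowHom_ofAdd_one (by omega), hφbarπ, hφa]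
      rfl
    · apply zmod_hom_ext
      simp only [MonoidHom.comp_apply, MonoidHom.id_apply, hχ, Coprod.lift_apply_inr]
      rw [zmodPowHom_ofAdd_one (by omega), hφbarπ, hφb]
      rfl
  have hcomp2 : χ.comp φbar = MonoidHom.id (G ⧸ N) := by
    apply QuotientGroup.monoidHom_ext
    apply PresentedGroup.ext
    intro x
    fin_cases x
    · show χ (φbar (π a)) = π a
      rw [hφbarπ, hφa, hχ, Coprod.lift_apply_inl, zmodPowHom_ofAdd_one (by omega)]
    · show χ (φbar (π b)) = π b
      rw [hφbarπ, hφb, hχ, Coprod.lift_apply_inr, zmodPowHom_ofAdd_one (by omega)]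
  set e : (G ⧸ N) ≃* C := MonoidHom.toMulEquiv φbar χ hcomp2 hcomp1 with he
  -- center is exactly N
  have hcen : Subgroup.center G = N := by
    apply le_antisymm _ hNle
    intro g hg
    have hd : ∀ y : C, y * e (π g) = e (π g) * y := by
      intro y
      obtain ⟨q, rfl⟩ := e.surjective y
      obtain ⟨h, rfl⟩ := QuotientGroup.mk'_surjective N q
      rw [← map_mul, ← map_mul, ← map_mul, ← map_mul]
      congr 1
      congr 1
      exact Subgroup.mem_center_iff.mp hg h
    have h1 : e (π g) = 1 := aux_coprod_central _ hd
    have h2 : π g = 1 := by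
      apply e.injective
      rw [h1, map_one]
    exact (QuotientGroup.eq_one_iff _).mp h2
  refine ⟨part1, by rw [hcen], ?_⟩
  exact ⟨(QuotientGroup.quotientMulEquivOfEq hcen).trans e⟩
end

section
/- Let X be a path-connected, locally path-connected, semi-locally simply connected space with universal covering p : Y → X, let F : X → X be a homeomorphism with F^n = id (n > 1), let σ be a path from x₀ to F(x₀), let σ̃ be the lift of σ starting at y₀ ∈ p⁻¹(x₀), and let F̃ be the unique lift of F with F̃(y₀) = σ̃(1). Then F̃^n = id_Y if and only if the loop τ = σ · (F∘σ) · (F²∘σ) ⋯ (F^{n-1}∘σ) represents the identity element of π₁(X, x₀). -/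
open Set Metric

section Lifting
variable {E X : Type*} [TopologicalSpace E] [TopologicalSpace X] {p : E → X}

theorem strip_lift {F : Type*} [TopologicalSpace F] (T : Bundle.Trivialization F p)
    {g : ℝ → X} (hg : Continuous g) {a b : ℝ} (hab : a ≤ b)
    (hbase : ∀ t ∈ Icc a b, g t ∈ T.baseSet) {y : E} (hy : p y = g a) :
    ∃ M : ℝ → E, Continuous M ∧ M a = y ∧ (∀ t ∈ Icc a b, p (M t) = g t) ∧
      M b = T.toOpenPartialHomeomorph.symm (g b, (T y).2) := by
  have hclamp : ∀ t : ℝ, max a (min t b) ∈ Icc a b := fun t =>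
    ⟨le_max_left _ _, max_le hab (min_le_right _ _)⟩
  have hmemT : ∀ t : ℝ, (g (max a (min t b)), (T y).2) ∈ T.target := fun t =>
    T.mem_target.2 (hbase _ (hclamp t))
  refine ⟨fun t => T.toOpenPartialHomeomorph.symm (g (max a (min t b)), (T y).2), ?_, ?_, ?_, ?_⟩
  · exact T.toOpenPartialHomeomorph.continuousOn_symm.comp_continuous
      ((hg.comp (continuous_const.max (continuous_id.min continuous_const))).prodMk
        continuous_const) hmemT
  · show T.toOpenPartialHomeomorph.symm (g (max a (min a b)), (T y).2) = y
    have hys : y ∈ T.source := T.mem_source.2 (hy ▸ hbase a ⟨le_refl a, hab⟩)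
    rw [min_eq_left hab, max_self]
    have : (g a, (T y).2) = T y := by
      have h1 : (T y).1 = p y := T.coe_fst hys
      rw [← Prod.mk.eta (p := T y), h1, hy]
    rw [this]
    exact T.toOpenPartialHomeomorph.left_inv hys
  · intro t ht
    show p (T.toOpenPartialHomeomorph.symm (g (max a (min t b)), (T y).2)) = g t
    rw [min_eq_left ht.2, max_eq_right ht.1]
    exact T.proj_symm_apply (T.mem_target.2 (hbase t ht))
  · show T.toOpenPartialHomeomorph.symm (g (max a (min b b)), (T y).2) = _
    rw [min_self, max_eq_right hab]


/-- Key interval-selection lemma. -/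
theorem interval_in_ball {δ : ℝ} {n j : ℕ} (hn0 : 0 < n) (hn : 1 / (n : ℝ) < δ) (hj : j < n) :
    ((2 * j + 1 : ℝ) / (2 * n) ∈ Icc (0:ℝ) 1) ∧
      Icc ((j : ℝ) / n) ((j + 1 : ℝ) / n) ⊆ ball ((2 * j + 1 : ℝ) / (2 * n)) δ := by
  have hn' : (0:ℝ) < n := by exact_mod_cast hn0
  have hj' : (j : ℝ) + 1 ≤ n := by exact_mod_cast hj
  constructor
  · constructor
    · positivity
    · rw [div_le_one (by positivity)]
      linarith
  · intro t ht
    have h1 : (j : ℝ) / n ≤ t := ht.1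
    have h2 : t ≤ ((j : ℝ) + 1) / n := by push_cast at ht ⊢; exact ht.2
    have e1 : (j : ℝ) / n = 2 * j / (2 * n) := by field_simp; try ring
    have e2 : ((j : ℝ) + 1) / n = (2 * j + 2) / (2 * n) := by field_simp; try ring
    have e3 : (1 : ℝ) / n = 2 / (2 * n) := by field_simp
    have h3 : 2 * (j:ℝ) / (2*n) ≤ t := e1 ▸ h1
    have h4 : t ≤ (2 * (j:ℝ) + 2) / (2*n) := e2 ▸ h2
    have hd : ((2:ℝ)*j+1) / (2*n) - 1/(2*n) = 2*j/(2*n) := by field_simp; try ring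
    have hd2 : ((2:ℝ)*j+1) / (2*n) + 1/(2*n) = (2*j+2)/(2*n) := by field_simp; try ring
    have hh : (1:ℝ)/(2*n) < δ := by
      rw [e3] at hn
      have : (1:ℝ)/(2*n) < 2/(2*n) :=
        (div_lt_div_iff_of_pos_right (by positivity)).2 one_lt_two
      linarith
    rw [mem_ball, Real.dist_eq, abs_lt]
    constructor <;> linarith

theorem cov_lift [∀ x : X, Nonempty (p ⁻¹' {x})] (hp : IsCoveringMap p) {g : ℝ → X} (hg : Continuous g)
    (y : E) (hy : p y = g 0) :
    ∃ L : ℝ → E, Continuous L ∧ L 0 = y ∧ ∀ t ∈ Icc (0:ℝ) 1, p (L t) = g t := by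
  obtain ⟨δ, hδ, hball⟩ := lebesgue_number_lemma_of_metric (isCompact_Icc (a := (0:ℝ)) (b := 1))
    (fun x : X => ((hp x).toTrivialization.open_baseSet.preimage hg))
    (fun t _ => mem_iUnion.2 ⟨g t, (hp (g t)).mem_toTrivialization_baseSet⟩)
  obtain ⟨m, hm⟩ := exists_nat_one_div_lt hδ
  obtain ⟨n, hn0, hn⟩ : ∃ n : ℕ, 0 < n ∧ 1 / (n : ℝ) < δ :=
    ⟨m + 1, Nat.succ_pos m, by push_cast; exact_mod_cast hm⟩
  have hn' : (0:ℝ) < n := by exact_mod_cast hn0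
  have key : ∀ j : ℕ, j < n →
      ∃ x : X, Icc ((j : ℝ) / n) ((j + 1 : ℝ) / n) ⊆ g ⁻¹' (hp x).toTrivialization.baseSet := by
    intro j hj
    obtain ⟨hc, hsub⟩ := interval_in_ball hn0 hn hj
    obtain ⟨x, hx⟩ := hball _ hc
    exact ⟨x, fun t ht => hx (hsub ht)⟩
  have main : ∀ j : ℕ, j ≤ n → ∃ L : ℝ → E, Continuous L ∧ (∀ t ≤ (0:ℝ), L t = y) ∧
      ∀ t ∈ Icc (0:ℝ) ((j : ℝ) / n), p (L t) = g t := by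
    intro j
    induction j with
    | zero =>
      intro _
      refine ⟨fun _ => y, continuous_const, fun _ _ => rfl, ?_⟩
      intro t ht
      simp only [Nat.cast_zero, zero_div] at ht
      rw [le_antisymm ht.2 ht.1, hy]
    | succ j ih =>
      intro hj1
      obtain ⟨L, hLc, hL0, hLp⟩ := ih (le_of_lt hj1)
      have hjn : j < n := hj1
      obtain ⟨x, hx⟩ := key j hjn
      set a : ℝ := (j : ℝ) / n
      set b : ℝ := ((j : ℝ) + 1) / n
      have hab : a ≤ b := by
        show (j:ℝ)/n ≤ ((j:ℝ)+1)/n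
        gcongr
        linarith
      have ha0 : (0:ℝ) ≤ a := by positivity
      have hyL : p (L a) = g a := hLp a ⟨ha0, le_refl a⟩
      have hbase : ∀ t ∈ Icc a b, g t ∈ (hp x).toTrivialization.baseSet := by
        intro t ht
        have := hx (by exact_mod_cast ht)
        exact this
      obtain ⟨M, hMc, hMa, hMp, _⟩ := strip_lift (hp x).toTrivialization hg hab hbase hyL
      refine ⟨fun t => if t ≤ a then L t else M t, ?_, ?_, ?_⟩
      · exact Continuous.if_le hLc hMc continuous_id continuous_const
          (fun t ht => by rw [ht, hMa])
      · intro t ht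
        show (if t ≤ a then L t else M t) = y
        rw [if_pos (le_trans ht ha0), hL0 t ht]
      · intro t ht
        show p (if t ≤ a then L t else M t) = g t
        by_cases h : t ≤ a
        · rw [if_pos h]; exact hLp t ⟨ht.1, h⟩
        · rw [if_neg h]
          push_cast at ht
          exact hMp t ⟨le_of_not_ge h, ht.2⟩
  obtain ⟨L, hLc, hL0, hLp⟩ := main n (le_refl n)
  refine ⟨L, hLc, hL0 0 (le_refl 0), ?_⟩
  intro t ht
  apply hLp
  rwa [div_self (ne_of_gt hn')]

theorem cov_monodromy [∀ x : X, Nonempty (p ⁻¹' {x})] (hp : IsCoveringMap p) {γ : ℝ → ℝ → X}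
    (hγ : Continuous fun z : ℝ × ℝ => γ z.1 z.2) {x₀ : X}
    (hγ1 : ∀ s, γ s 1 = x₀) {y₀ : E}
    (L : ℝ → ℝ → E) (hLc : ∀ s, Continuous (L s)) (hL0 : ∀ s, L s 0 = y₀)
    (hLp : ∀ s, ∀ t ∈ Icc (0:ℝ) 1, p (L s t) = γ s t) :
    L 0 1 = L 1 1 := by
  obtain ⟨δ, hδ, hball⟩ := lebesgue_number_lemma_of_metric
    ((isCompact_Icc (a := (0:ℝ)) (b := 1)).prod (isCompact_Icc (a := (0:ℝ)) (b := 1)))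
    (fun x : X => (hp x).toTrivialization.open_baseSet.preimage hγ)
    (fun z _ => mem_iUnion.2 ⟨γ z.1 z.2, (hp _).mem_toTrivialization_baseSet⟩)
  obtain ⟨m, hm⟩ := exists_nat_one_div_lt hδ
  obtain ⟨n, hn0, hn⟩ : ∃ n : ℕ, 0 < n ∧ 1 / (n : ℝ) < δ :=
    ⟨m + 1, Nat.succ_pos m, by push_cast; exact_mod_cast hm⟩
  have hn' : (0:ℝ) < n := by exact_mod_cast hn0
  have hslice : ∀ u : ℝ, Continuous (γ u) := fun u =>
    hγ.comp (continuous_const.prodMk continuous_id)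
  -- local constancy of the endpoint
  have LC : ∀ s ∈ Icc (0:ℝ) 1, ∀ s' ∈ Icc (0:ℝ) 1, |s' - s| < 1/n → L s' 1 = L s 1 := by
    intro s hs s' hs' hss
    have key : ∀ j : ℕ, ∃ x : X, j < n → ∀ u ∈ Icc (0:ℝ) 1, |u - s| < 1/n →
        ∀ t ∈ Icc ((j:ℝ)/n) (((j:ℝ)+1)/n), γ u t ∈ (hp x).toTrivialization.baseSet := by
      intro j
      by_cases hj : j < n
      · obtain ⟨hc, hsub⟩ := interval_in_ball hn0 hn hj
        obtain ⟨x, hx⟩ := hball ((s, (2*(j:ℝ)+1)/(2*(n:ℝ)))) ⟨hs, hc⟩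
        refine ⟨x, fun _ u hu huss t ht => ?_⟩
        have hmem : ((u, t) : ℝ × ℝ) ∈ ball ((s, (2*(j:ℝ)+1)/(2*(n:ℝ)))) δ := by
          rw [mem_ball, Prod.dist_eq]
          refine max_lt ?_ ?_
          · rw [Real.dist_eq]; exact lt_trans huss hn
          · exact mem_ball.1 (hsub ht)
        exact hx hmem
      · exact ⟨x₀, fun h => absurd h hj⟩
    choose pt hpt using key
    have habj : ∀ j : ℕ, (j:ℝ)/n ≤ ((j:ℝ)+1)/n := by
      intro j
      gcongr <;> linarith
    have hb1j : ∀ j : ℕ, j < n → ((j:ℝ)+1)/n ≤ 1 := by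
      intro j hj
      rw [div_le_one hn']
      exact_mod_cast hj
    have hss0 : |s - s| < 1/n := by rw [sub_self, abs_zero]; positivity
    -- Claim A : explicit formula for the lift at the next grid point
    have claimA : ∀ (j : ℕ), j < n → ∀ u ∈ Icc (0:ℝ) 1, |u - s| < 1/n →
        L u (((j:ℝ)+1)/n) = (hp (pt j)).toTrivialization.toOpenPartialHomeomorph.symm
          (γ u (((j:ℝ)+1)/n), ((hp (pt j)).toTrivialization (L u ((j:ℝ)/n))).2) := by
      intro j hj u hu huss
      have hab := habj j
      have ha0 : (0:ℝ) ≤ (j:ℝ)/n := by positivity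
      have hb1 := hb1j j hj
      have hbase : ∀ t ∈ Icc ((j:ℝ)/n) (((j:ℝ)+1)/n),
          γ u t ∈ (hp (pt j)).toTrivialization.baseSet := fun t ht => hpt j hj u hu huss t ht
      have hyL : p (L u ((j:ℝ)/n)) = γ u ((j:ℝ)/n) := hLp u _ ⟨ha0, le_trans hab hb1⟩
      obtain ⟨M, hMc, hMa, hMp, hMb⟩ :=
        strip_lift (hp (pt j)).toTrivialization (hslice u) hab hbase hyL
      have hEq : EqOn (L u) M (Icc ((j:ℝ)/n) (((j:ℝ)+1)/n)) := by
        refine hp.eqOn_of_comp_eqOn isPreconnected_Icc (hLc u).continuousOn hMc.continuousOn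
          (fun t ht => ?_) ⟨le_refl _, hab⟩ hMa.symm
        show p (L u t) = p (M t)
        rw [hLp u t ⟨le_trans ha0 ht.1, le_trans ht.2 hb1⟩, hMp t ht]
      rw [hEq ⟨hab, le_refl _⟩, hMb]
    -- Claim B : the fiber coordinate at grid points does not depend on the parameter
    have claimB : ∀ j : ℕ, j < n →
        ((hp (pt j)).toTrivialization (L s' ((j:ℝ)/n))).2 =
        ((hp (pt j)).toTrivialization (L s ((j:ℝ)/n))).2 := by
      intro j
      induction j with
      | zero =>
        intro _
        norm_num [hL0]
      | succ j ih =>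
        intro hj1
        have hjn : j < n := Nat.lt_of_succ_lt hj1
        have hc := ih hjn
        have hcast : ((j+1 : ℕ) : ℝ) = (j:ℝ)+1 := by push_cast; ring
        have hAs' := claimA j hjn s' hs' hss
        have hAs := claimA j hjn s hs hss0
        rw [hcast, hAs', hAs, hc]
        set T := (hp (pt j)).toTrivialization with hT
        set T' := (hp (pt (j+1))).toTrivialization with hT'
        set c := (T (L s ((j:ℝ)/n))).2 with hcd
        set b : ℝ := ((j:ℝ)+1)/n with hb
        set Q : Set ℝ := ball s (1/n) ∩ Icc 0 1 with hQ
        haveI : DiscreteTopology ↥(p ⁻¹' {pt (j+1)}) := (hp (pt (j+1))).1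
        have hQpre : IsPreconnected Q :=
          ((convex_ball s (1/n)).inter (convex_Icc 0 1)).isPreconnected
        have hmemQ : ∀ u ∈ Q, |u - s| < 1/n := by
          intro u hu
          have := hu.1
          rwa [mem_ball, Real.dist_eq] at this
        have hbmem : b ∈ Icc ((j:ℝ)/n) (((j:ℝ)+1)/n) := ⟨habj j, le_refl _⟩
        have hbmem' : b ∈ Icc (((j:ℝ)+1)/n) (((j:ℝ)+1+1)/n) := by
          constructor
          · exact le_refl _
          · show ((j:ℝ)+1)/n ≤ ((j:ℝ)+1+1)/n
            gcongr <;> linarith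
        have hbase1 : ∀ u ∈ Q, γ u b ∈ T.baseSet := fun u hu =>
          hpt j hjn u hu.2 (hmemQ u hu) b hbmem
        have hbase2 : ∀ u ∈ Q, γ u b ∈ T'.baseSet := by
          intro u hu
          exact hpt (j+1) hj1 u hu.2 (hmemQ u hu) b (by push_cast; exact hbmem')
        have hsliceb : Continuous fun u : ℝ => γ u b :=
          hγ.comp (continuous_id.prodMk continuous_const)
        have hχ : ContinuousOn
            (fun u => (T' (T.toOpenPartialHomeomorph.symm (γ u b, c))).2) Q := by
          have h2 : ContinuousOn (fun u => T.toOpenPartialHomeomorph.symm (γ u b, c)) Q := by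
            apply T.toOpenPartialHomeomorph.continuousOn_symm.comp
              ((hsliceb.prodMk continuous_const).continuousOn)
            intro u hu
            exact T.mem_target.2 (hbase1 u hu)
          have h3 : ContinuousOn (fun u => T' (T.toOpenPartialHomeomorph.symm (γ u b, c))) Q := by
            apply T'.toOpenPartialHomeomorph.continuousOn.comp h2
            intro u hu
            refine T'.mem_source.2 ?_
            rw [T.proj_symm_apply (T.mem_target.2 (hbase1 u hu))]
            exact hbase2 u hu
          exact continuous_snd.comp_continuousOn h3
        have hsub := (hQpre.image _ hχ).subsingleton
        have hsQ : s ∈ Q := ⟨mem_ball_self (by positivity), hs⟩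
        have hs'Q : s' ∈ Q := ⟨by rwa [mem_ball, Real.dist_eq], hs'⟩
        exact hsub (mem_image_of_mem _ hs'Q) (mem_image_of_mem _ hsQ)
    -- conclude using the last strip
    have hn1 : n - 1 < n := Nat.sub_lt hn0 one_pos
    have hcast1 : ((↑(n-1):ℝ)+1)/n = 1 := by
      have h1 : ((n-1 : ℕ):ℝ) = (n:ℝ) - 1 := by
        push_cast [Nat.cast_sub (Nat.one_le_iff_ne_zero.2 (Nat.pos_iff_ne_zero.1 hn0))]
        ring
      rw [h1]
      field_simp
      ring
    have hAs' := claimA (n-1) hn1 s' hs' hss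
    have hAs := claimA (n-1) hn1 s hs hss0
    rw [hcast1] at hAs' hAs
    rw [hAs', hAs, claimB (n-1) hn1, hγ1 s', hγ1 s]
  -- chain from 0 to 1
  have h2n' : (0:ℝ) < 2*n := by positivity
  have chain : ∀ k : ℕ, k ≤ 2*n → L ((k:ℝ)/(2*(n:ℝ))) 1 = L 0 1 := by
    intro k
    induction k with
    | zero => intro _; norm_num
    | succ k ih =>
      intro hk
      have hk' : k ≤ 2*n := Nat.le_of_succ_le hk
      have hkr : (k:ℝ) + 1 ≤ 2*(n:ℝ) := by exact_mod_cast hk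
      have h1 : ((k:ℝ)+1)/(2*(n:ℝ)) ∈ Icc (0:ℝ) 1 := by
        constructor
        · positivity
        · rw [div_le_one h2n']; linarith
      have h2 : (k:ℝ)/(2*(n:ℝ)) ∈ Icc (0:ℝ) 1 := by
        constructor
        · positivity
        · rw [div_le_one h2n']; linarith
      have hdist : |((k:ℝ)+1)/(2*(n:ℝ)) - (k:ℝ)/(2*(n:ℝ))| < 1/n := by
        have he : ((k:ℝ)+1)/(2*(n:ℝ)) - (k:ℝ)/(2*(n:ℝ)) = 1/(2*(n:ℝ)) := by ring
        rw [he, abs_of_pos (by positivity)]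
        rw [div_lt_div_iff₀ (by positivity) hn']
        nlinarith
      have := LC ((k:ℝ)/(2*(n:ℝ))) h2 (((k:ℝ)+1)/(2*(n:ℝ))) h1 hdist
      have hcast : ((k+1 : ℕ):ℝ) = (k:ℝ)+1 := by push_cast; ring
      rw [hcast, this, ih hk']
  have hfin := chain (2*n) (le_refl _)
  have : ((2*n : ℕ):ℝ)/(2*(n:ℝ)) = 1 := by
    push_cast
    field_simp
  rw [this] at hfin
  exact hfin.symm

end Lifting

/-- The path `τ⁽ⁿ⁾ = σ · (F∘σ) · (F²∘σ) ⋯ (F^{n-1}∘σ)` from `x₀` to `F^[n] x₀`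
obtained by concatenating the translates of `σ` under the iterates of `F`. -/
noncomputable def tauPath {X : Type*} [TopologicalSpace X] {F : X → X}
    (hF : Continuous F) {x₀ : X} (σ : Path x₀ (F x₀)) :
    (n : ℕ) → Path x₀ (F^[n] x₀)
  | 0 => Path.refl x₀
  | n + 1 =>
    (tauPath hF σ n).trans
      ((σ.map (hF.iterate n)).cast rfl (Function.iterate_succ_apply F n x₀))

/-- Let `p : Y → X` be a universal covering (with `X` path connected and
locally path connected and `Y` simply connected), `F : X → X` an `n`-periodic
homeomorphism (`n > 1`), `σ` a path from `x₀` to `F(x₀)`, `σ̃` its lift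
starting at `y₀ ∈ p⁻¹(x₀)`, and `F̃` the lift of `F` with `F̃(y₀) = σ̃(1)`.
Then `F̃` is `n`-periodic if and only if the loop
`τ = σ · (F∘σ) · (F²∘σ) ⋯ (F^{n-1}∘σ)` represents the identity element of
`π₁(X, x₀)`, i.e. is null-homotopic. -/
theorem lift_is_periodic_iff_loop_nullhomotopic {X Y : Type*}
    [TopologicalSpace X] [TopologicalSpace Y] [PathConnectedSpace X]
    [LocallyPathConnectedSpace X] [SimplyConnectedSpace Y]
    (p : Y → X) (hp : IsCoveringMap p) (F : Homeomorph X X) (n : ℕ)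
    (hn : 1 < n) (hFn : ∀ x, (⇑F)^[n] x = x) (x₀ : X) (y₀ y₁ : Y)
    (hy₀ : p y₀ = x₀) (σ : Path x₀ (F x₀)) (σt : Path y₀ y₁)
    (hσt : ∀ t, p (σt t) = σ t) (Ft : Y → Y) (hFtc : Continuous Ft)
    (hlift : p ∘ Ft = ⇑F ∘ p) (hbase : Ft y₀ = y₁) :
    (∀ y, Ft^[n] y = y) ↔
      ((tauPath F.continuous σ n).cast rfl (hFn x₀).symm).Homotopic
        (Path.refl x₀) := by
  subst hy₀
  have hσt' : ∀ t, p ((σt.cast rfl hbase : Path y₀ (Ft y₀)) t) = σ t := by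
    intro t
    rw [show ((σt.cast rfl hbase : Path y₀ (Ft y₀)) t) = σt t from congr_fun (Path.cast_coe ..) t]
    exact hσt t
  set σt' : Path y₀ (Ft y₀) := σt.cast rfl hbase with hσt'def
  have hiter : ∀ (k : ℕ) (y : Y), p (Ft^[k] y) = (⇑F)^[k] (p y) := by
    intro k
    induction k with
    | zero => intro y; rfl
    | succ k ih =>
      intro y
      rw [Function.iterate_succ_apply', Function.iterate_succ_apply',
        show p (Ft (Ft^[k] y)) = F (p (Ft^[k] y)) from congr_fun hlift _, ih]
  have htau : ∀ (k : ℕ) (t : unitInterval),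
      p (tauPath hFtc σt' k t) = tauPath F.continuous σ k t := by
    intro k
    induction k with
    | zero => intro t; simp [tauPath]; rfl
    | succ k ih =>
      intro t
      simp only [tauPath]
      rw [Path.trans_apply, Path.trans_apply]
      split_ifs with h
      · exact ih _
      · rw [show (((σt'.map (hFtc.iterate k)).cast rfl (Function.iterate_succ_apply Ft k y₀)) _)
            = (σt'.map (hFtc.iterate k)) _ from congr_fun (Path.cast_coe ..) _,
          show (((σ.map (F.continuous.iterate k)).cast rfl
              (Function.iterate_succ_apply (⇑F) k (p y₀))) _)
            = (σ.map (F.continuous.iterate k)) _ from congr_fun (Path.cast_coe ..) _,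
          Path.map_coe, Path.map_coe]
        show p (Ft^[k] (σt' _)) = (⇑F)^[k] (σ _)
        rw [hiter, hσt']
  constructor
  · intro hFt
    have hloopY : ((tauPath hFtc σt' n).cast rfl (hFt y₀).symm).Homotopic (Path.refl y₀) :=
      SimplyConnectedSpace.paths_homotopic _ _
    have hmap := hloopY.map ⟨p, hp.continuous⟩
    have h1 : (Path.refl y₀).map (ContinuousMap.mk p hp.continuous).continuous
        = Path.refl (p y₀) := by
      ext t
      rw [Path.map_coe]
      rfl
    have h2 : ((tauPath hFtc σt' n).cast rfl (hFt y₀).symm).map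
        (ContinuousMap.mk p hp.continuous).continuous
        = (tauPath F.continuous σ n).cast rfl (hFn (p y₀)).symm := by
      ext t
      rw [Path.map_coe]
      show p (((tauPath hFtc σt' n).cast rfl (hFt y₀).symm) t) = _
      rw [show (((tauPath hFtc σt' n).cast rfl (hFt y₀).symm) t)
          = (tauPath hFtc σt' n) t from congr_fun (Path.cast_coe ..) t,
        show (((tauPath F.continuous σ n).cast rfl (hFn (p y₀)).symm) t)
          = (tauPath F.continuous σ n) t from congr_fun (Path.cast_coe ..) t]
      exact htau n t
    rw [h1, h2] at hmap
    exact hmap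
  · rintro ⟨Htpy⟩
    set τY : Path y₀ (Ft^[n] y₀) := tauPath hFtc σt' n with hτY
    have hproj0 : Set.projIcc (0:ℝ) 1 zero_le_one 0 = 0 := by simp
    have hproj1 : Set.projIcc (0:ℝ) 1 zero_le_one 1 = 1 := by simp
    set γf : ℝ → ℝ → X := fun s t =>
      Htpy (Set.projIcc 0 1 zero_le_one s, Set.projIcc 0 1 zero_le_one t) with hγf
    have hγc : Continuous fun z : ℝ × ℝ => γf z.1 z.2 :=
      Htpy.continuous.comp ((continuous_projIcc.comp continuous_fst).prodMk
        (continuous_projIcc.comp continuous_snd))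
    have hγ0 : ∀ s, γf s 0 = p y₀ := by
      intro s
      show Htpy (_, Set.projIcc 0 1 zero_le_one 0) = p y₀
      rw [hproj0]
      exact Htpy.source _
    have hγ1 : ∀ s, γf s 1 = p y₀ := by
      intro s
      show Htpy (_, Set.projIcc 0 1 zero_le_one 1) = p y₀
      rw [hproj1]
      exact Htpy.target _
    haveI : ∀ x : X, Nonempty (p ⁻¹' {x}) := fun x => by
      obtain ⟨Γ, hΓ, h0⟩ := hp.exists_path_lifts
        (PathConnectedSpace.somePath (p y₀) x).toContinuousMap y₀ (by simp)
      refine ⟨⟨Γ 1, ?_⟩⟩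
      have := congr_fun hΓ 1
      simpa using this
    have hex : ∀ s : ℝ, ∃ L : ℝ → Y, Continuous L ∧ L 0 = y₀ ∧
        ∀ t ∈ Set.Icc (0:ℝ) 1, p (L t) = γf s t := fun s =>
      cov_lift hp (hγc.comp (continuous_const.prodMk continuous_id)) y₀ (hγ0 s).symm
    choose Lf hLc hL0 hLp using hex
    have hend := cov_monodromy hp hγc hγ1 Lf hLc hL0 hLp
    have hid0 : Set.EqOn (Lf 0) τY.extend (Set.Icc 0 1) := by
      refine hp.eqOn_of_comp_eqOn isPreconnected_Icc (hLc 0).continuousOn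
        τY.continuous_extend.continuousOn (fun t ht => ?_)
        (Set.left_mem_Icc.2 zero_le_one) (by rw [hL0 0, Path.extend_zero])
      show p (Lf 0 t) = p (τY.extend t)
      rw [hLp 0 t ht]
      show Htpy (Set.projIcc 0 1 zero_le_one 0, _) = p (τY (Set.projIcc 0 1 zero_le_one t))
      rw [hproj0, htau n]
      have := Htpy.apply_zero (Set.projIcc 0 1 zero_le_one t)
      rw [this]
      exact congr_fun (Path.cast_coe _ _ _) _
    have hL01 : Lf 0 1 = Ft^[n] y₀ := by
      have := hid0 (Set.right_mem_Icc.2 zero_le_one)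
      rw [this, Path.extend_one]
    have hL11 : Lf 1 1 = y₀ := by
      have hconst : Set.EqOn (Lf 1) (fun _ => y₀) (Set.Icc 0 1) := by
        refine hp.eqOn_of_comp_eqOn isPreconnected_Icc (hLc 1).continuousOn
          continuous_const.continuousOn (fun t ht => ?_)
          (Set.left_mem_Icc.2 zero_le_one) (hL0 1)
        show p (Lf 1 t) = p y₀
        rw [hLp 1 t ht]
        show Htpy (Set.projIcc 0 1 zero_le_one 1, _) = p y₀
        rw [hproj1]
        have := Htpy.apply_one (Set.projIcc 0 1 zero_le_one t)
        rw [this]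
        rfl
      exact hconst (Set.right_mem_Icc.2 zero_le_one)
    have hfix : Ft^[n] y₀ = y₀ := by rw [← hL01, hend, hL11]
    have hps : p ∘ Ft^[n] = p ∘ id := by
      funext y
      show p (Ft^[n] y) = p y
      rw [hiter n y, hFn]
    have hfin := hp.eq_of_comp_eq (hFtc.iterate n) continuous_id hps y₀ hfix
    intro y
    exact congr_fun hfin y
end
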